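/- arXiv:2602.16478 — 2 statements merged into one kernel-verified Lean document; each statement's English description precedes it below -/
import Mathlib

section
/- Let (Ω, F, P) be a probability space, (X, ‖·‖_X) a Banach space, and u : Ω × ℝ≥0 → X a stochastic process such that for each t ≥ 0 the map ω ↦ ‖u(ω,t)‖_X is measurable. Fix ε > 0. Assume: (1) for P-almost every ω there exists A(ω) < ∞ and an increasing function φ : ℝ≥0 → ℝ≥0 such that ‖u(ω,t) − u(ω,t')‖_X ≤ A(ω) φ(t) whenever t, t' ≥ 0 and |t − t'| ≤ 1; (2) there exist increasing functions ψ, λ : ℝ≥0 → ℝ≥0, with ψ a bijection of ℝ≥0 onto ℝ≥0 (so that its inverse ψ⁻¹ exists and is increasing), such that the ensemble bound E[ψ(‖u(·,t)‖_X)] ≤ λ(t) holds for all t ≥ 0. Then for P-almost every ω there exists a constant C(ω) < ∞ such that ‖u(ω,t)‖_X ≤ C(ω) · ( φ(t) + ψ⁻¹( λ(t) · (1+t)^{1+ε} ) ) for all t ≥ 0. -/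
open MeasureTheory NNReal

/-- Theorem 1.2 (main abstract result): a pathwise local increment control together with
an ensemble bound `E[ψ(‖u(t)‖)] ≤ λ(t)` yields the pathwise bound
`‖u^ω(t)‖ ≤ C(ω) (φ(t) + ψ⁻¹(λ(t)(1+t)^{1+ε}))`. -/
theorem stmt1 {Ω : Type*} [MeasurableSpace Ω] (μ : Measure Ω) [IsProbabilityMeasure μ]
    {X : Type*} [NormedAddCommGroup X] [NormedSpace ℝ X] [CompleteSpace X]
    (u : Ω → ℝ≥0 → X) (hmeas : ∀ t : ℝ≥0, Measurable fun ω => ‖u ω t‖)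
    (ε : ℝ) (hε : 0 < ε)
    (φ : ℝ≥0 → ℝ≥0) (hφ : Monotone φ)
    (hinc : ∀ᵐ ω ∂μ, ∃ A : ℝ, ∀ t t' : ℝ≥0, dist t t' ≤ 1 →
      ‖u ω t - u ω t'‖ ≤ A * (φ t : ℝ))
    (ψ lam : ℝ≥0 → ℝ≥0) (hψ : Monotone ψ) (hlam : Monotone lam)
    (hψbij : Function.Bijective ψ)
    (ψinv : ℝ≥0 → ℝ≥0) (hψinv : Function.RightInverse ψinv ψ) (hψinvmono : Monotone ψinv)
    (hens : ∀ t : ℝ≥0, ∫⁻ ω, (ψ ‖u ω t‖₊ : ENNReal) ∂μ ≤ (lam t : ENNReal)) :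
    ∀ᵐ ω ∂μ, ∃ C : ℝ, ∀ t : ℝ≥0,
      ‖u ω t‖ ≤ C * ((φ t : ℝ) + (ψinv (lam t * (1 + t) ^ (1 + ε)) : ℝ)) := by
  have hp0 : (0:ℝ) ≤ 1 + ε := by linarith
  -- basic facts about ψ
  have hψ0 : ψ 0 = 0 := by
    obtain ⟨x, hx⟩ := hψbij.2 0
    exact le_antisymm ((hψ (show (0:ℝ≥0) ≤ x from zero_le)).trans_eq hx) zero_le
  have hψsm : StrictMono ψ := hψ.strictMono_of_injective hψbij.1
  have hle : ∀ {a c : ℝ≥0}, ψ a ≤ c → a ≤ ψinv c := by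
    intro a c h
    rw [← hψsm.le_iff_le]
    rwa [hψinv c]
  have hψinv0 : ∀ {x : ℝ≥0}, ψinv x = 0 → x = 0 := by
    intro x h
    have := hψinv x
    rw [h, hψ0] at this
    exact this.symm
  -- the threshold function
  set b : ℝ≥0 → ℝ≥0 := fun t => lam t * (1 + t) ^ (1 + ε) with hbdef
  have hbmono : Monotone b := by
    intro s t hst
    exact mul_le_mul' (hlam hst) (NNReal.rpow_le_rpow (by simpa using hst) hp0)
  have hbpow_ne : ∀ n : ℕ, ((1 + (n:ℝ≥0)) ^ (1 + ε)) ≠ 0 := by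
    intro n
    exact (NNReal.rpow_pos (by positivity)).ne'
  -- measurability
  have hfmeas : ∀ n : ℕ, Measurable fun ω => (ψ ‖u ω (n:ℝ≥0)‖₊ : ENNReal) := by
    intro n
    have h1 : Measurable fun ω => ‖u ω (n:ℝ≥0)‖₊ := by
      have : (fun ω => ‖u ω (n:ℝ≥0)‖₊) = fun ω => Real.toNNReal ‖u ω (n:ℝ≥0)‖ := by
        funext ω; simp [Real.toNNReal_coe, ← norm_toNNReal]
      rw [this]
      exact (hmeas _).real_toNNReal
    exact measurable_coe_nnreal_ennreal.comp (hψ.measurable.comp h1)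
  -- bad sets and Borel-Cantelli
  set s : ℕ → Set Ω := fun n => {ω | (b n : ENNReal) < (ψ ‖u ω (n:ℝ≥0)‖₊ : ENNReal)} with hsdef
  have hμs : ∀ n : ℕ, μ (s n) ≤ ((((1 + (n:ℝ≥0)) ^ (1 + ε))⁻¹ : ℝ≥0) : ENNReal) := by
    intro n
    by_cases hl : lam (n:ℝ≥0) = 0
    · have h0 : ∫⁻ ω, (ψ ‖u ω (n:ℝ≥0)‖₊ : ENNReal) ∂μ = 0 :=
        le_antisymm (by simpa [hl] using hens (n:ℝ≥0)) zero_le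
      have hae := (lintegral_eq_zero_iff (hfmeas n)).mp h0
      have : μ (s n) = 0 := by
        refine measure_mono_null ?_ hae
        intro ω hω
        simp only [hsdef, Set.mem_setOf_eq] at hω
        simp only [Set.mem_setOf_eq, Pi.zero_apply]
        exact (pos_of_gt hω).ne'
      simp [this]
    · have hb0 : (b (n:ℝ≥0) : ENNReal) ≠ 0 := by
        simp only [hbdef]
        push_cast
        exact mul_ne_zero (by exact_mod_cast hl) (by exact_mod_cast hbpow_ne n)
      have hbt : (b (n:ℝ≥0) : ENNReal) ≠ ⊤ := ENNReal.coe_ne_top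
      have hmark := meas_ge_le_lintegral_div (μ := μ)
        (f := fun ω => (ψ ‖u ω (n:ℝ≥0)‖₊ : ENNReal)) (hfmeas n).aemeasurable hb0 hbt
      have hsub : μ (s n) ≤ μ {ω | (b (n:ℝ≥0) : ENNReal) ≤ (ψ ‖u ω (n:ℝ≥0)‖₊ : ENNReal)} := by
        refine measure_mono fun ω hω => ?_
        simp only [hsdef, Set.mem_setOf_eq] at hω ⊢
        exact le_of_lt hω
      refine hsub.trans (hmark.trans ?_)
      have hdiv : (lam (n:ℝ≥0) : ENNReal) / (b (n:ℝ≥0) : ENNReal)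
          = 1 / (((1 + (n:ℝ≥0)) ^ (1 + ε) : ℝ≥0) : ENNReal) := by
        have ha0 : (lam (n:ℝ≥0) : ENNReal) ≠ 0 := by exact_mod_cast hl
        have hat : (lam (n:ℝ≥0) : ENNReal) ≠ ⊤ := ENNReal.coe_ne_top
        rw [show (b (n:ℝ≥0) : ENNReal)
            = (lam (n:ℝ≥0) : ENNReal) * (((1 + (n:ℝ≥0)) ^ (1 + ε) : ℝ≥0) : ENNReal) by
          simp [hbdef, ENNReal.coe_mul]]
        rw [div_eq_mul_inv, ENNReal.mul_inv (Or.inl ha0) (Or.inl hat), ← mul_assoc,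
          ENNReal.mul_inv_cancel ha0 hat, one_mul, one_div]
      refine le_of_le_of_eq ((ENNReal.div_le_div (hens (n:ℝ≥0)) le_rfl).trans hdiv.le) ?_
      rw [one_div, ← ENNReal.coe_inv (hbpow_ne n)]
  have hsum : (∑' n : ℕ, μ (s n)) ≠ ⊤ := by
    have hS : Summable fun n : ℕ => (((1 + (n:ℝ≥0)) ^ (1 + ε))⁻¹ : ℝ≥0) := by
      rw [← NNReal.summable_coe]
      have heq : (fun n : ℕ => ((((1 + (n:ℝ≥0)) ^ (1 + ε))⁻¹ : ℝ≥0) : ℝ))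
          = fun n : ℕ => 1 / ((n + 1 : ℝ)) ^ (1 + ε) := by
        funext n
        rw [NNReal.coe_inv, NNReal.coe_rpow, one_div]
        norm_num [add_comm]
      rw [heq]
      have := (Real.summable_one_div_nat_rpow (p := 1 + ε)).2 (by linarith)
      have := (_root_.summable_nat_add_iff 1).2 this
      simpa using this
    have := (ENNReal.tsum_coe_ne_top_iff_summable).2 hS
    exact ne_top_of_le_ne_top this (ENNReal.tsum_le_tsum hμs)
  have hbc : ∀ᵐ ω ∂μ, ∀ᶠ n in Filter.atTop, ω ∉ s n := ae_eventually_notMem hsum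
  -- the zero-lambda integer times
  have hzero : ∀ᵐ ω ∂μ, ∀ n : ℕ, lam (n:ℝ≥0) = 0 → ‖u ω (n:ℝ≥0)‖ = 0 := by
    rw [ae_all_iff]
    intro n
    by_cases hl : lam (n:ℝ≥0) = 0
    · have h0 : ∫⁻ ω, (ψ ‖u ω (n:ℝ≥0)‖₊ : ENNReal) ∂μ = 0 :=
        le_antisymm (by simpa [hl] using hens (n:ℝ≥0)) zero_le
      have hae := (lintegral_eq_zero_iff (hfmeas n)).mp h0
      filter_upwards [hae] with ω hω _
      simp only [Pi.zero_apply, ENNReal.coe_eq_zero] at hω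
      have : ‖u ω (n:ℝ≥0)‖₊ = 0 := hψbij.1 (by rw [hω, hψ0])
      simpa using this
    · exact Filter.Eventually.of_forall fun ω h => absurd h hl
  -- combine
  filter_upwards [hinc, hbc, hzero] with ω hω hev hz
  obtain ⟨A, hA⟩ := hω
  obtain ⟨N, hN⟩ := Filter.eventually_atTop.mp hev
  set Apos : ℝ := max A 0 with hApos
  have hApos0 : 0 ≤ Apos := le_max_right _ _
  set d : ℕ → ℝ := fun n => ((φ (n:ℝ≥0) : ℝ) + (ψinv (b (n:ℝ≥0)) : ℝ)) with hddef
  have hd0 : ∀ n, 0 ≤ d n := fun n => by positivity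
  set c : ℕ → ℝ := fun n => ‖u ω (n:ℝ≥0)‖ / d n with hcdef
  have hc0 : ∀ n, 0 ≤ c n := fun n => div_nonneg (norm_nonneg _) (hd0 n)
  refine ⟨Apos + 1 + ∑ n ∈ Finset.range N, c n, fun t => ?_⟩
  set C : ℝ := Apos + 1 + ∑ n ∈ Finset.range N, c n with hCdef
  have hsum0 : 0 ≤ ∑ n ∈ Finset.range N, c n := Finset.sum_nonneg fun n _ => hc0 n
  have hC1 : Apos + 1 ≤ C := by simp [hCdef, hsum0]
  have hC0 : 0 ≤ C := by positivity
  set n : ℕ := Nat.floor t with hndef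
  have hnt : ((n:ℕ) : ℝ≥0) ≤ t := Nat.floor_le (show (0:ℝ≥0) ≤ t from zero_le)
  have hdist : dist t ((n:ℕ) : ℝ≥0) ≤ 1 := by
    have h1 : ((n:ℕ) : ℝ) ≤ (t : ℝ) := by exact_mod_cast hnt
    have h2 : (t : ℝ) < (n : ℝ) + 1 := by exact_mod_cast Nat.lt_floor_add_one t
    rw [NNReal.dist_eq]
    push_cast
    rw [abs_of_nonneg (by linarith)]
    linarith
  -- the pathwise increment bound
  have h1 : ‖u ω t‖ ≤ ‖u ω ((n:ℕ) : ℝ≥0)‖ + Apos * (φ t : ℝ) := by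
    have := hA t ((n:ℕ) : ℝ≥0) hdist
    have htri : ‖u ω t‖ ≤ ‖u ω ((n:ℕ) : ℝ≥0)‖ + ‖u ω t - u ω ((n:ℕ) : ℝ≥0)‖ := by
      have := norm_add_le (u ω ((n:ℕ) : ℝ≥0)) (u ω t - u ω ((n:ℕ) : ℝ≥0))
      simpa using this
    have hAA : A * (φ t : ℝ) ≤ Apos * (φ t : ℝ) :=
      mul_le_mul_of_nonneg_right (le_max_left _ _) (φ t).coe_nonneg
    linarith
  -- monotonicity facts
  have hφle : (φ ((n:ℕ) : ℝ≥0) : ℝ) ≤ (φ t : ℝ) := by exact_mod_cast hφ hnt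
  have hψle : (ψinv (b ((n:ℕ) : ℝ≥0)) : ℝ) ≤ (ψinv (b t) : ℝ) := by
    exact_mod_cast hψinvmono (hbmono hnt)
  have hdg : d n ≤ (φ t : ℝ) + (ψinv (b t) : ℝ) := add_le_add hφle hψle
  have hgφ : (φ t : ℝ) ≤ (φ t : ℝ) + (ψinv (b t) : ℝ) :=
    le_add_of_nonneg_right (ψinv (b t)).coe_nonneg
  have hg0 : (0:ℝ) ≤ (φ t : ℝ) + (ψinv (b t) : ℝ) := by positivity
  show ‖u ω t‖ ≤ C * ((φ t : ℝ) + (ψinv (b t) : ℝ))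
  by_cases hnN : N ≤ n
  · -- large times: use Borel-Cantelli
    have hns := hN n hnN
    simp only [hsdef, Set.mem_setOf_eq, not_lt] at hns
    have hψb : ψ ‖u ω ((n:ℕ) : ℝ≥0)‖₊ ≤ b ((n:ℕ) : ℝ≥0) := by exact_mod_cast hns
    have h2 : ‖u ω ((n:ℕ) : ℝ≥0)‖ ≤ (ψinv (b t) : ℝ) := by
      have := (hle hψb).trans (hψinvmono (hbmono hnt))
      have h3 : (‖u ω ((n:ℕ) : ℝ≥0)‖₊ : ℝ) ≤ (ψinv (b t) : ℝ) := by exact_mod_cast this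
      simpa using h3
    calc ‖u ω t‖ ≤ (ψinv (b t) : ℝ) + Apos * (φ t : ℝ) := by linarith
      _ ≤ ((φ t : ℝ) + (ψinv (b t) : ℝ)) + Apos * ((φ t : ℝ) + (ψinv (b t) : ℝ)) := by
          have := mul_le_mul_of_nonneg_left hgφ hApos0
          have h4 := (φ t).coe_nonneg
          linarith
      _ = (1 + Apos) * ((φ t : ℝ) + (ψinv (b t) : ℝ)) := by ring
      _ ≤ C * ((φ t : ℝ) + (ψinv (b t) : ℝ)) :=
          mul_le_mul_of_nonneg_right (by linarith) hg0
  · push_neg at hnN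
    by_cases hdn : d n = 0
    · -- degenerate small times: everything vanishes
      have hdn' : (φ ((n:ℕ) : ℝ≥0) : ℝ) + (ψinv (b ((n:ℕ) : ℝ≥0)) : ℝ) = 0 := hdn
      have hφn2 : (ψinv (b ((n:ℕ) : ℝ≥0)) : ℝ) = 0 :=
        le_antisymm (by nlinarith [(φ ((n:ℕ) : ℝ≥0)).coe_nonneg]) (ψinv _).coe_nonneg
      have hbn : b ((n:ℕ) : ℝ≥0) = 0 := hψinv0 (by exact_mod_cast hφn2)
      have hln : lam ((n:ℕ) : ℝ≥0) = 0 := by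
        rcases mul_eq_zero.mp hbn with h | h
        · exact h
        · exact absurd h (hbpow_ne n)
      have hun : ‖u ω ((n:ℕ) : ℝ≥0)‖ = 0 := hz n hln
      rw [hun] at h1
      calc ‖u ω t‖ ≤ Apos * (φ t : ℝ) := by linarith
        _ ≤ C * ((φ t : ℝ) + (ψinv (b t) : ℝ)) :=
          mul_le_mul (by linarith) hgφ (φ t).coe_nonneg hC0
    · -- nondegenerate small times: use the stored constants
      have hun : ‖u ω ((n:ℕ) : ℝ≥0)‖ = c n * d n := (div_mul_cancel₀ _ hdn).symm
      have hcn : c n ≤ ∑ m ∈ Finset.range N, c m :=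
        Finset.single_le_sum (fun m _ => hc0 m) (Finset.mem_range.2 hnN)
      have h2 : ‖u ω ((n:ℕ) : ℝ≥0)‖ ≤ c n * ((φ t : ℝ) + (ψinv (b t) : ℝ)) := by
        rw [hun]
        exact mul_le_mul_of_nonneg_left hdg (hc0 n)
      calc ‖u ω t‖ ≤ c n * ((φ t : ℝ) + (ψinv (b t) : ℝ)) + Apos * (φ t : ℝ) := by linarith
        _ ≤ c n * ((φ t : ℝ) + (ψinv (b t) : ℝ))
              + Apos * ((φ t : ℝ) + (ψinv (b t) : ℝ)) := by
            have := mul_le_mul_of_nonneg_left hgφ hApos0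
            linarith
        _ = (c n + Apos) * ((φ t : ℝ) + (ψinv (b t) : ℝ)) := by ring
        _ ≤ C * ((φ t : ℝ) + (ψinv (b t) : ℝ)) :=
            mul_le_mul_of_nonneg_right (by linarith) hg0
end

section
/- Let (Ω, F, P) be a probability space, (X, ‖·‖_X) a Banach space, and u : Ω × ℝ≥0 → X a stochastic process such that for each t ≥ 0 the map ω ↦ ‖u(ω,t)‖_X is measurable, and such that for every t ≥ 0 the law of ‖u(·,t)‖_X equals the law of ‖u(·,0)‖_X (in particular this holds if the process is stationary). Fix ε > 0. Assume: (1) for P-almost every ω there exists A(ω) < ∞ and an increasing function φ : ℝ≥0 → ℝ≥0 such that ‖u(ω,t) − u(ω,t')‖_X ≤ A(ω) φ(t) whenever t, t' ≥ 0 and |t − t'| ≤ 1; (2) there exists an increasing bijection ψ : ℝ≥0 → ℝ≥0 (with increasing inverse ψ⁻¹) such that E[ψ(‖u(·,0)‖_X)] < ∞. Then for P-almost every ω there exists a constant C(ω) < ∞ such that ‖u(ω,t)‖_X ≤ C(ω) · ( φ(t) + ψ⁻¹( (1+t)^{1+ε} ) ) for all t ≥ 0. -/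
open MeasureTheory NNReal

/-- Corollary (stationary case): for a process whose norm marginals are identically
distributed, a single-time ensemble bound `E[ψ(‖u(0)‖)] < ∞` together with a pathwise
local increment control yields `‖u^ω(t)‖ ≤ C(ω) (φ(t) + ψ⁻¹((1+t)^{1+ε}))`. -/
theorem stmt2 {Ω : Type*} [MeasurableSpace Ω] (μ : Measure Ω) [IsProbabilityMeasure μ]
    {X : Type*} [NormedAddCommGroup X] [NormedSpace ℝ X] [CompleteSpace X]
    (u : Ω → ℝ≥0 → X) (hmeas : ∀ t : ℝ≥0, Measurable fun ω => ‖u ω t‖)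
    (hlaw : ∀ t : ℝ≥0, μ.map (fun ω => ‖u ω t‖) = μ.map (fun ω => ‖u ω 0‖))
    (ε : ℝ) (hε : 0 < ε)
    (φ : ℝ≥0 → ℝ≥0) (hφ : Monotone φ)
    (hinc : ∀ᵐ ω ∂μ, ∃ A : ℝ, ∀ t t' : ℝ≥0, dist t t' ≤ 1 →
      ‖u ω t - u ω t'‖ ≤ A * (φ t : ℝ))
    (ψ : ℝ≥0 → ℝ≥0) (hψ : Monotone ψ) (hψbij : Function.Bijective ψ)
    (ψinv : ℝ≥0 → ℝ≥0) (hψinv : Function.RightInverse ψinv ψ) (hψinvmono : Monotone ψinv)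
    (hens : ∫⁻ ω, (ψ ‖u ω 0‖₊ : ENNReal) ∂μ < ⊤) :
    ∀ᵐ ω ∂μ, ∃ C : ℝ, ∀ t : ℝ≥0,
      ‖u ω t‖ ≤ C * ((φ t : ℝ) + (ψinv ((1 + t) ^ (1 + ε)) : ℝ)) := by
  classical
  -- ψ 0 = 0, hence ψinv 1 > 0
  have hψ0 : ψ 0 = 0 := by
    obtain ⟨x, hx⟩ := hψbij.2 0
    have h1 : ψ 0 ≤ ψ x := hψ (zero_le : (0:ℝ≥0) ≤ x)
    rw [hx] at h1
    exact le_antisymm h1 zero_le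
  have hc0 : 0 < ψinv 1 := by
    rcases (zero_le : (0:ℝ≥0) ≤ ψinv 1).eq_or_lt with h | h
    · exfalso
      have h2 := hψinv 1
      rw [← h, hψ0] at h2
      exact one_ne_zero h2.symm
    · exact h
  set c0 : ℝ := (ψinv 1 : ℝ) with hc0def
  have hc0R : 0 < c0 := hc0
  -- measurability of the composed functionals
  have hψmeas : Measurable ψ := hψ.measurable
  have hnn : ∀ (t : ℝ≥0) (ω : Ω), Real.toNNReal ‖u ω t‖ = ‖u ω t‖₊ := by
    intro t ω
    rw [← coe_nnnorm, Real.toNNReal_coe]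
  set g : ℝ → ENNReal := fun x => (ψ (Real.toNNReal x) : ENNReal) with hg
  have hgmeas : Measurable g :=
    measurable_coe_nnreal_ennreal.comp (hψmeas.comp measurable_real_toNNReal)
  have hFmeas : ∀ t : ℝ≥0, Measurable fun ω => (ψ ‖u ω t‖₊ : ENNReal) := by
    intro t
    have : (fun ω => (ψ ‖u ω t‖₊ : ENNReal)) = fun ω => g ‖u ω t‖ := by
      funext ω; rw [hg]; simp [hnn t ω]
    rw [this]
    exact hgmeas.comp (hmeas t)
  -- equal integrals at all times
  set I : ENNReal := ∫⁻ ω, (ψ ‖u ω 0‖₊ : ENNReal) ∂μ with hI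
  have hIeq : ∀ t : ℝ≥0, ∫⁻ ω, (ψ ‖u ω t‖₊ : ENNReal) ∂μ = I := by
    intro t
    have h1 : ∀ s : ℝ≥0,
        ∫⁻ ω, (ψ ‖u ω s‖₊ : ENNReal) ∂μ = ∫⁻ x, g x ∂(μ.map fun ω => ‖u ω s‖) := by
      intro s
      rw [lintegral_map hgmeas (hmeas s)]
      congr 1; funext ω; rw [hg]; simp [hnn s ω]
    rw [h1 t, hlaw t, ← h1 0]
  -- the thresholds
  set c : ℕ → ℝ≥0 := fun n => (1 + (n : ℝ≥0)) ^ (1 + ε) with hc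
  have hcpos : ∀ n, 0 < c n := by
    intro n
    exact NNReal.rpow_pos (by positivity)
  -- Markov inequality for the events
  set s : ℕ → Set Ω := fun n => {ω | ((c n : ENNReal)) ≤ (ψ ‖u ω (n : ℝ≥0)‖₊ : ENNReal)} with hs
  have hμs : ∀ n, μ (s n) ≤ I / (c n : ENNReal) := by
    intro n
    have := meas_ge_le_lintegral_div (μ := μ)
      (hFmeas (n : ℝ≥0)).aemeasurable
      (ε := (c n : ENNReal)) (by exact_mod_cast (hcpos n).ne') ENNReal.coe_ne_top
    rw [hIeq] at this
    exact this
  -- summability of the series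
  have hsummable : Summable fun n : ℕ => ((c n)⁻¹ : ℝ) := by
    have h1 : Summable fun n : ℕ => ((n : ℝ)) ^ (-(1 + ε)) :=
      Real.summable_nat_rpow.mpr (by linarith)
    have h2 : Summable fun n : ℕ => (((n + 1 : ℕ) : ℝ)) ^ (-(1 + ε)) :=
      (summable_nat_add_iff (f := fun n : ℕ => ((n : ℝ)) ^ (-(1 + ε))) 1).mpr h1
    apply h2.congr
    intro n
    rw [hc]
    push_cast
    rw [Real.rpow_neg (by positivity)]
    congr 2
    ring
  have hsum : (∑' n, μ (s n)) ≠ ⊤ := by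
    have h1 : (∑' n : ℕ, I / (c n : ENNReal)) ≠ ⊤ := by
      have heq : ∀ n : ℕ, I / (c n : ENNReal) = I * (((c n)⁻¹ : ℝ≥0) : ENNReal) := by
        intro n
        rw [ENNReal.div_eq_inv_mul, mul_comm, ENNReal.coe_inv (hcpos n).ne']
      simp only [heq]
      rw [ENNReal.tsum_mul_left]
      apply ENNReal.mul_ne_top hens.ne
      rw [ENNReal.tsum_coe_ne_top_iff_summable]
      rw [← NNReal.summable_coe]
      exact hsummable.congr (by intro n; simp)
    exact ne_top_of_le_ne_top h1 (ENNReal.tsum_le_tsum hμs)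
  -- Borel-Cantelli + increment hypothesis
  filter_upwards [hinc, ae_eventually_notMem hsum] with ω hA hev
  obtain ⟨A, hA⟩ := hA
  obtain ⟨N, hN⟩ := Filter.eventually_atTop.mp hev
  -- bound at large integer times
  have hint : ∀ n : ℕ, N ≤ n → ‖u ω (n : ℝ≥0)‖₊ ≤ ψinv (c n) := by
    intro n hn
    have h1 : ¬ ((c n : ENNReal) ≤ (ψ ‖u ω (n : ℝ≥0)‖₊ : ENNReal)) := hN n hn
    push_neg at h1
    by_contra h2
    push_neg at h2
    have h3 := hψ h2.le
    rw [hψinv] at h3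
    exact absurd (by exact_mod_cast h3) (not_le_of_gt h1)
  -- bound at small integer times
  set M : ℝ := ∑ n ∈ Finset.range N, ‖u ω (n : ℝ≥0)‖ with hM
  have hMnonneg : 0 ≤ M := Finset.sum_nonneg fun _ _ => norm_nonneg _
  have hMle : ∀ n : ℕ, n < N → ‖u ω (n : ℝ≥0)‖ ≤ M := by
    intro n hn
    exact Finset.single_le_sum (f := fun i : ℕ => ‖u ω ((i : ℕ) : ℝ≥0)‖)
      (fun i _ => norm_nonneg _) (Finset.mem_range.mpr hn)
  set A' : ℝ := max A 0 with hA'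
  have hA'nonneg : 0 ≤ A' := le_max_right _ _
  refine ⟨A' + 1 + M / c0, fun t => ?_⟩
  set n : ℕ := ⌊t⌋₊ with hn
  have hnt : (n : ℝ≥0) ≤ t := Nat.floor_le (zero_le : (0:ℝ≥0) ≤ t)
  have htn : t < (n : ℝ≥0) + 1 := Nat.lt_floor_add_one t
  have hdist : dist t ((n : ℕ) : ℝ≥0) ≤ 1 := by
    rw [NNReal.dist_eq, abs_le]
    have h1 : (((n : ℕ) : ℝ≥0) : ℝ) ≤ (t : ℝ) := hnt
    have h2 : (t : ℝ) < (((n : ℕ) : ℝ≥0) : ℝ) + 1 := by exact_mod_cast htn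
    constructor <;> linarith
  -- increment bound
  have hincr : ‖u ω t‖ ≤ ‖u ω (n : ℝ≥0)‖ + A' * (φ t : ℝ) := by
    have h1 : ‖u ω t‖ ≤ ‖u ω (n : ℝ≥0)‖ + ‖u ω t - u ω (n : ℝ≥0)‖ := by
      have := norm_add_le (u ω (n : ℝ≥0)) (u ω t - u ω (n : ℝ≥0))
      simpa using this
    have h2 : ‖u ω t - u ω (n : ℝ≥0)‖ ≤ A * (φ t : ℝ) := hA t ((n : ℕ) : ℝ≥0) hdist
    have h3 : A * (φ t : ℝ) ≤ A' * (φ t : ℝ) :=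
      mul_le_mul_of_nonneg_right (le_max_left _ _) (φ t).coe_nonneg
    linarith
  set Q : ℝ := (ψinv ((1 + t) ^ (1 + ε)) : ℝ) with hQdef
  have hQc0 : c0 ≤ Q := by
    have h1 : (1 : ℝ≥0) ≤ (1 + t) ^ (1 + ε) := by
      have := NNReal.rpow_le_rpow (x := 1) (y := 1 + t) (by simp) (by linarith : (0:ℝ) ≤ 1 + ε)
      rwa [NNReal.one_rpow] at this
    exact_mod_cast hψinvmono h1
  have hQnonneg : 0 ≤ Q := le_trans hc0R.le hQc0
  -- bound on ‖u ω n‖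
  have hnorm : ‖u ω (n : ℝ≥0)‖ ≤ Q + M := by
    rcases lt_or_ge n N with hcase | hcase
    · have := hMle n hcase
      linarith
    · have h1 : ‖u ω (n : ℝ≥0)‖₊ ≤ ψinv (c n) := hint n hcase
      have h2 : c n ≤ (1 + t) ^ (1 + ε) := by
        apply NNReal.rpow_le_rpow _ (by linarith : (0:ℝ) ≤ 1 + ε)
        exact add_le_add_right hnt 1
      have h3 : ψinv (c n) ≤ ψinv ((1 + t) ^ (1 + ε)) := hψinvmono h2
      have h4 : ‖u ω (n : ℝ≥0)‖ ≤ Q := by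
        calc ‖u ω (n : ℝ≥0)‖ = ((‖u ω (n : ℝ≥0)‖₊ : ℝ≥0) : ℝ) := by rw [coe_nnnorm]
          _ ≤ ((ψinv (c n) : ℝ≥0) : ℝ) := by exact_mod_cast h1
          _ ≤ Q := by exact_mod_cast h3
      linarith
  -- final arithmetic
  have hMQ : M ≤ M / c0 * Q := by
    calc M = M / c0 * c0 := by field_simp
      _ ≤ M / c0 * Q := mul_le_mul_of_nonneg_left hQc0 (div_nonneg hMnonneg hc0R.le)
  have hP : (0 : ℝ) ≤ (φ t : ℝ) := (φ t).coe_nonneg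
  have key : ‖u ω t‖ ≤ Q + M + A' * (φ t : ℝ) := by linarith
  have expand : (A' + 1 + M / c0) * ((φ t : ℝ) + Q)
      = A' * (φ t : ℝ) + A' * Q + (φ t : ℝ) + Q + (M / c0) * (φ t : ℝ) + (M / c0) * Q := by
    ring
  have h5 : 0 ≤ A' * Q := mul_nonneg hA'nonneg hQnonneg
  have h6 : 0 ≤ (M / c0) * (φ t : ℝ) := mul_nonneg (div_nonneg hMnonneg hc0R.le) hP
  linarith
end
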